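/- Define the rational numbers c_k = (C(2k,k))²/16^k and g_k = 4·c_k·(H_{2k} − H_k) for k ∈ ℕ, where H_m = ∑_{j=1}^m 1/j is the m-th harmonic number (so g_0 = 0). Then for every natural number k, (k+1)²·g_{k+1} − (k+1/2)²·g_k = (2k+1)·c_k − 2(k+1)·c_{k+1}. Consequently, the formal power series G(z) = ∑_{k≥1} g_k z^k and F(z) = ∑_{k≥0} c_k z^k satisfy θ²G − z(θ+1/2)²G = z(2θ+1)F − 2θF, where θ = z·d/dz; this expresses that F(z)·ln(z) + G(z) is annihilated by the Picard–Fuchs operator θ² − z(θ+1/2)². -/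

import Mathlib

open PowerSeries

/-- With `c_k = C(2k,k)²/16^k` and `g_k = 4·c_k·(H_{2k} - H_k)` (harmonic numbers `H_m`),
one has `(k+1)²g_{k+1} - (k+1/2)²g_k = (2k+1)c_k - 2(k+1)c_{k+1}` for all `k`; consequently
the power series `G = ∑_{k≥1} g_k z^k` and `F = ∑_{k≥0} c_k z^k` satisfy
`θ²G - z(θ+1/2)²G = z(2θ+1)F - 2θF` where `θ = z·d/dz`, expressing that
`F·ln(z) + G` is annihilated by the Picard–Fuchs operator `θ² - z(θ+1/2)²`. -/
theorem legendre_log_period (H : ℕ → ℚ)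
    (hH : ∀ m, H m = ∑ j ∈ Finset.range m, (1 : ℚ) / (j + 1))
    (c g : ℕ → ℚ)
    (hc : ∀ k, c k = (Nat.choose (2 * k) k : ℚ) ^ 2 / 16 ^ k)
    (hg : ∀ k, g k = 4 * c k * (H (2 * k) - H k))
    (θ : PowerSeries ℚ → PowerSeries ℚ)
    (hθ : ∀ P, θ P = PowerSeries.mk fun j => (j : ℚ) * PowerSeries.coeff (R := ℚ) j P)
    (F G : PowerSeries ℚ) (hF : F = PowerSeries.mk c) (hG : G = PowerSeries.mk g) :
    (∀ k : ℕ, ((k : ℚ) + 1) ^ 2 * g (k + 1) - ((k : ℚ) + 1/2) ^ 2 * g k =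
        (2 * (k : ℚ) + 1) * c k - 2 * ((k : ℚ) + 1) * c (k + 1)) ∧
    θ (θ G) - PowerSeries.X * (θ (θ G) + θ G + PowerSeries.C (R := ℚ) (1/4) * G) =
      PowerSeries.X * (2 * θ F + F) - 2 * θ F := by
  have key : ∀ k : ℕ, ((k : ℚ) + 1) ^ 2 * g (k + 1) - ((k : ℚ) + 1/2) ^ 2 * g k =
      (2 * (k : ℚ) + 1) * c k - 2 * ((k : ℚ) + 1) * c (k + 1) := by
    intro k
    have hk1 : ((k : ℚ) + 1) ≠ 0 := by positivity
    have hk2 : (2 * (k : ℚ) + 1) ≠ 0 := by positivity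
    have hk3 : (2 * (k : ℚ) + 2) ≠ 0 := by positivity
    have h16 : (16 : ℚ) ^ k ≠ 0 := by positivity
    -- central binomial recurrence
    have hbin := Nat.succ_mul_centralBinom_succ k
    have hbin' : ((k : ℚ) + 1) * (Nat.choose (2 * (k + 1)) (k + 1) : ℚ)
        = 2 * (2 * (k : ℚ) + 1) * (Nat.choose (2 * k) k : ℚ) := by
      have := congrArg (fun n : ℕ => (n : ℚ)) hbin
      simp [Nat.centralBinom] at this
      push_cast at this
      linarith [this]
    have hcrec : c (k + 1) = (2 * (k : ℚ) + 1) ^ 2 * c k / (4 * ((k : ℚ) + 1) ^ 2) := by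
      rw [hc, hc]
      field_simp
      linear_combination (4 * 16 ^ k * (((k : ℚ) + 1) * (Nat.choose (2 * (k + 1)) (k + 1) : ℚ)
        + 2 * (2 * (k : ℚ) + 1) * (Nat.choose (2 * k) k : ℚ))) * hbin'
    have hHrec : H (2 * (k + 1)) - H (k + 1)
        = (H (2 * k) - H k) + 1 / (2 * (k : ℚ) + 1) - 1 / (2 * (k : ℚ) + 2) := by
      have e1 : 2 * (k + 1) = (2 * k + 1) + 1 := by ring
      rw [e1, hH, hH, hH, hH, Finset.sum_range_succ, Finset.sum_range_succ,
        Finset.sum_range_succ]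
      push_cast
      field_simp
      ring
    rw [hg, hg, hcrec, hHrec]
    field_simp
    ring
  refine ⟨key, ?_⟩
  have h2 : (2 : PowerSeries ℚ) = PowerSeries.C (R := ℚ) 2 := (map_ofNat _ 2).symm
  ext n
  rcases n with _ | m
  · simp [hθ, hF, hG, coeff_mk, hg, hH]
  · have hkey := key m
    simp only [hθ, hF, hG, h2, map_sub, map_add, map_mul, coeff_mk,
      PowerSeries.coeff_succ_X_mul, PowerSeries.coeff_C_mul]
    push_cast
    linear_combination hkey
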